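/- Let λ⁻ < λ⁺ ∈ (-1,1) and n ≥ 2. The set of positive semidefinite Gram matrices G = [XᵀX, XᵀY; YᵀX, YᵀY] (over all dimensions d and X, Y ∈ ℝ^{d×n} with columns x_i, y_i) such that there exists a symmetric matrix W ∈ ℝ^{n×n} with W𝟏 = 𝟏, eigenvalue 1 simple with eigenvector 𝟏/√n, all other eigenvalues in [λ⁻, λ⁺], and Yᵀ = WXᵀ, is not convex. -/

import Mathlib

open Matrix

theorem stmt_2 (n : ℕ) (hn : 2 ≤ n) (lm lp : ℝ) (hlt : lm < lp)
    (hlm : lm ∈ Set.Ioo (-1 : ℝ) 1) (hlp : lp ∈ Set.Ioo (-1 : ℝ) 1) :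
    ¬ Convex ℝ { G : Matrix (Fin n ⊕ Fin n) (Fin n ⊕ Fin n) ℝ |
        ∃ (d : ℕ) (X Y : Matrix (Fin d) (Fin n) ℝ),
          G = Matrix.fromBlocks (Xᵀ * X) (Xᵀ * Y) (Yᵀ * X) (Yᵀ * Y) ∧
          ∃ W : Matrix (Fin n) (Fin n) ℝ,
            W.IsSymm ∧
            W.mulVec (fun _ => 1) = (fun _ => 1) ∧
            (∀ v : Fin n → ℝ, (∑ i, v i) = 0 →
              lm * (v ⬝ᵥ v) ≤ v ⬝ᵥ W.mulVec v ∧ v ⬝ᵥ W.mulVec v ≤ lp * (v ⬝ᵥ v)) ∧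
            Yᵀ = W * Xᵀ } := by
  intro hconv
  have hnpos : 0 < (n : ℝ) := by positivity
  have hn0 : (n : ℝ) ≠ 0 := ne_of_gt hnpos
  set i0 : Fin n := ⟨0, by omega⟩ with hi0def
  set i1 : Fin n := ⟨1, by omega⟩ with hi1def
  have hi01 : i0 ≠ i1 := by simp [hi0def, hi1def, Fin.ext_iff]
  set u : Fin n → ℝ :=
    fun i => (if i = i0 then (1:ℝ) else 0) - (if i = i1 then 1 else 0) with hudef
  have hsum : ∑ i, u i = 0 := by
    simp [hudef, Finset.sum_sub_distrib]
  have hui0 : u i0 = 1 := by simp [hudef, hi01]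
  set Gmat : ℝ → Matrix (Fin n ⊕ Fin n) (Fin n ⊕ Fin n) ℝ := fun a =>
    Matrix.fromBlocks (Matrix.of fun i j => u i * u j)
      (Matrix.of fun i j => a * (u i * u j))
      (Matrix.of fun i j => a * (u i * u j))
      (Matrix.of fun i j => (a * a) * (u i * u j)) with hGmatdef
  -- membership of Gmat a for lm ≤ a ≤ lp
  have key : ∀ a : ℝ, lm ≤ a → a ≤ lp →
      ∃ (d : ℕ) (X Y : Matrix (Fin d) (Fin n) ℝ),
        Gmat a = Matrix.fromBlocks (Xᵀ * X) (Xᵀ * Y) (Yᵀ * X) (Yᵀ * Y) ∧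
        ∃ W : Matrix (Fin n) (Fin n) ℝ,
          W.IsSymm ∧
          W.mulVec (fun _ => 1) = (fun _ => 1) ∧
          (∀ v : Fin n → ℝ, (∑ i, v i) = 0 →
            lm * (v ⬝ᵥ v) ≤ v ⬝ᵥ W.mulVec v ∧ v ⬝ᵥ W.mulVec v ≤ lp * (v ⬝ᵥ v)) ∧
          Yᵀ = W * Xᵀ := by
    intro a ha1 ha2
    refine ⟨1, Matrix.of fun _ j => u j, Matrix.of fun _ j => a * u j, ?_, ?_⟩
    · ext i j
      cases i <;> cases j <;>
        simp [hGmatdef, Matrix.mul_apply, Fin.sum_univ_one] <;> ring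
    · refine ⟨Matrix.of fun i j => (if i = j then a else 0) + (1 - a)/n, ?_, ?_, ?_, ?_⟩
      · ext i j
        simp [Matrix.transpose_apply, eq_comm]
      · funext i
        simp only [Matrix.mulVec, dotProduct, Matrix.of_apply, mul_one]
        rw [Finset.sum_add_distrib]
        rw [Finset.sum_ite_eq Finset.univ i (fun _ => a)]
        simp [Finset.card_univ]
        field_simp
        ring
      · intro v hv
        have hWv : Matrix.mulVec (Matrix.of fun i j => (if i = j then a else 0) + (1 - a)/n) v
            = fun i => a * v i := by
          funext i
          simp only [Matrix.mulVec, dotProduct, Matrix.of_apply]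
          have : ∀ j, ((if i = j then a else 0) + (1 - a)/n) * v j
              = (if i = j then a * v j else 0) + (1 - a)/n * v j := by
            intro j; by_cases h : i = j <;> simp [h] <;> ring
          rw [Finset.sum_congr rfl (fun j _ => this j), Finset.sum_add_distrib,
            Finset.sum_ite_eq Finset.univ i (fun j => a * v j), ← Finset.mul_sum, hv]
          simp
        rw [hWv]
        have hdot : v ⬝ᵥ (fun i => a * v i) = a * (v ⬝ᵥ v) := by
          simp only [dotProduct, Finset.mul_sum]
          exact Finset.sum_congr rfl fun i _ => by ring
        have hvv : 0 ≤ v ⬝ᵥ v := Finset.sum_nonneg fun i _ => mul_self_nonneg _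
        rw [hdot]
        constructor <;> nlinarith
      · ext j k
        simp only [Matrix.transpose_apply, Matrix.mul_apply, Matrix.of_apply]
        have : ∀ l, ((if j = l then a else 0) + (1 - a)/n) * u l
            = (if j = l then a * u l else 0) + (1 - a)/n * u l := by
          intro l; by_cases h : j = l <;> simp [h] <;> ring
        rw [Finset.sum_congr rfl (fun l _ => this l), Finset.sum_add_distrib,
          Finset.sum_ite_eq Finset.univ j (fun l => a * u l), ← Finset.mul_sum, hsum]
        simp
  have h1 := Set.mem_setOf.mpr (key lm le_rfl hlt.le)
  have h2 := Set.mem_setOf.mpr (key lp hlt.le le_rfl)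
  have hmid := hconv h1 h2 (by norm_num : (0:ℝ) ≤ 1/2) (by norm_num : (0:ℝ) ≤ 1/2)
    (by norm_num : (1:ℝ)/2 + 1/2 = 1)
  rw [Set.mem_setOf_eq] at hmid
  obtain ⟨d, X, Y, hG, W, hWs, -, -, hYX⟩ := hmid
  set m : ℝ := (lm + lp)/2 with hmdef
  set q : ℝ := (lm * lm + lp * lp)/2 with hqdef
  have hxx : ∀ i j, (Xᵀ * X) i j = u i * u j := by
    intro i j
    have := congrFun (congrFun hG (Sum.inl i)) (Sum.inl j)
    simp [hGmatdef, Matrix.add_apply, Matrix.smul_apply, smul_eq_mul] at this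
    linear_combination -this
  have hxy : (Xᵀ * Y) i0 i0 = m := by
    have := congrFun (congrFun hG (Sum.inl i0)) (Sum.inr i0)
    simp [hGmatdef, Matrix.add_apply, Matrix.smul_apply, smul_eq_mul, hui0, hmdef] at this
    linarith [this]
  have hyy : (Yᵀ * Y) i0 i0 = q := by
    have := congrFun (congrFun hG (Sum.inr i0)) (Sum.inr i0)
    simp [hGmatdef, Matrix.add_apply, Matrix.smul_apply, smul_eq_mul, hui0, hqdef] at this
    linarith [this]
  have hY : Y = X * W := by
    have := congrArg Matrix.transpose hYX
    simpa [Matrix.transpose_mul, hWs.eq] using this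
  set w : Fin n → ℝ := fun i => ∑ k, W i k * u k with hwdef
  have hWsym : ∀ i j, W i j = W j i := by
    intro i j
    have h := congrFun (congrFun hWs.eq j) i
    simpa [Matrix.transpose_apply] using h
  have hB : ∀ k j, ((Xᵀ * X) * W) k j = u k * w j := by
    intro k j
    rw [Matrix.mul_apply]
    calc ∑ l, (Xᵀ * X) k l * W l j = ∑ l, u k * (W j l * u l) := by
          refine Finset.sum_congr rfl fun l _ => ?_
          rw [hxx, hWsym l j]; ring
      _ = u k * w j := by rw [← Finset.mul_sum]
  have e1 : m = w i0 := by
    have hX : Xᵀ * Y = (Xᵀ * X) * W := by rw [hY, Matrix.mul_assoc]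
    have := hB i0 i0
    rw [← hX, hxy, hui0, one_mul] at this
    exact this
  have e2 : q = w i0 * w i0 := by
    have hX : Yᵀ * Y = W * ((Xᵀ * X) * W) := by
      rw [hYX, hY, Matrix.mul_assoc, Matrix.mul_assoc]
    have hwi : ((W * ((Xᵀ * X) * W))) i0 i0 = w i0 * w i0 := by
      rw [Matrix.mul_apply]
      calc ∑ k, W i0 k * ((Xᵀ * X) * W) k i0
          = ∑ k, (W i0 k * u k) * w i0 := by
            refine Finset.sum_congr rfl fun k _ => ?_
            rw [hB]; ring
        _ = w i0 * w i0 := by rw [← Finset.sum_mul]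
    rw [← hX, hyy] at hwi
    exact hwi
  rw [← e1] at e2
  rw [hqdef, hmdef] at e2
  nlinarith [sq_nonneg (lm - lp), e2]
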